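/- arXiv:0706.3405 — 3 statements merged into one kernel-verified Lean document; each statement's English description precedes it below -/
import Mathlib

section
/- For any n ≥ 2 and d ≥ 2, f(n,d) ≤ min over 0 ≤ k ≤ n−2 of ( f(k,d) + f(n−k−1,d) ) + f(n,d−1), where f(n,d) is the maximum of τ over families of axis-parallel boxes in ℝ^d with independence number at most n, and f(0,d) = 0. -/
/-- A finite point set `S` pierces the family `F` if every member contains a point of `S`. -/
def Piercing {α : Type*} (S : Finset α) (F : Finset (Set α)) : Prop :=
  ∀ B ∈ F, ∃ p ∈ S, p ∈ B

/-- The piercing (transversal) number τ of a finite family of sets. -/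
noncomputable def tau {α : Type*} (F : Finset (Set α)) : ℕ :=
  sInf {n | ∃ S : Finset α, S.card = n ∧ Piercing S F}

/-- The independence number ν : the maximal number of pairwise disjoint members. -/
noncomputable def nu {α : Type*} (F : Finset (Set α)) : ℕ :=
  sSup {n | ∃ G ⊆ F, G.card = n ∧ (G : Set (Set α)).PairwiseDisjoint id}

section basics
variable {α : Type*}

def nuSet (F : Finset (Set α)) : Set ℕ :=
  {n | ∃ G ⊆ F, G.card = n ∧ (G : Set (Set α)).PairwiseDisjoint id}

lemma nu_eq (F : Finset (Set α)) : nu F = sSup (nuSet F) := rfl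

lemma nuSet_nonempty (F : Finset (Set α)) : (nuSet F).Nonempty :=
  ⟨0, ∅, Finset.empty_subset _, Finset.card_empty, by simp⟩

lemma nuSet_bddAbove (F : Finset (Set α)) : BddAbove (nuSet F) := by
  refine ⟨F.card, ?_⟩
  rintro m ⟨G, hG, rfl, -⟩
  exact Finset.card_le_card hG

lemma le_nu {F G : Finset (Set α)} (hG : G ⊆ F)
    (hd : (G : Set (Set α)).PairwiseDisjoint id) : G.card ≤ nu F :=
  le_csSup (nuSet_bddAbove F) ⟨G, hG, rfl, hd⟩

lemma nu_mono {F G : Finset (Set α)} (h : G ⊆ F) : nu G ≤ nu F := by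
  refine csSup_le (nuSet_nonempty G) ?_
  rintro m ⟨H, hH, rfl, hd⟩
  exact le_nu (hH.trans h) hd

lemma exists_nu_witness (F : Finset (Set α)) :
    ∃ G ⊆ F, G.card = nu F ∧ (G : Set (Set α)).PairwiseDisjoint id := by
  have := Nat.sSup_mem (nuSet_nonempty F) (nuSet_bddAbove F)
  obtain ⟨G, hG, hc, hd⟩ := this
  exact ⟨G, hG, hc, hd⟩

def tauSet (F : Finset (Set α)) : Set ℕ :=
  {n | ∃ S : Finset α, S.card = n ∧ Piercing S F}

lemma tau_eq (F : Finset (Set α)) : tau F = sInf (tauSet F) := rfl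

lemma tauSet_nonempty (F : Finset (Set α)) (hne : ∀ B ∈ F, B.Nonempty) :
    (tauSet F).Nonempty := by
  classical
  refine ⟨_, F.attach.image (fun B => (hne B.1 B.2).some), rfl, ?_⟩
  intro B hB
  exact ⟨(hne B hB).some, Finset.mem_image.2 ⟨⟨B, hB⟩, Finset.mem_attach _ _, rfl⟩,
    (hne B hB).some_mem⟩

lemma tau_le_card {F : Finset (Set α)} {S : Finset α} (h : Piercing S F) :
    tau F ≤ S.card :=
  Nat.sInf_le ⟨S, rfl, h⟩

lemma exists_tau_witness (F : Finset (Set α)) (hne : ∀ B ∈ F, B.Nonempty) :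
    ∃ S : Finset α, S.card = tau F ∧ Piercing S F :=
  Nat.sInf_mem (tauSet_nonempty F hne)

lemma tau_mono {F G : Finset (Set α)} (h : G ⊆ F) (hne : ∀ B ∈ F, B.Nonempty) :
    tau G ≤ tau F := by
  obtain ⟨S, hc, hp⟩ := exists_tau_witness F hne
  exact hc ▸ tau_le_card (fun B hB => hp B (h hB))

lemma tau_union_le [DecidableEq (Set α)] {F G : Finset (Set α)}
    (hF : ∀ B ∈ F, B.Nonempty) (hG : ∀ B ∈ G, B.Nonempty) :
    tau (F ∪ G) ≤ tau F + tau G := by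
  classical
  obtain ⟨S, hSc, hSp⟩ := exists_tau_witness F hF
  obtain ⟨T, hTc, hTp⟩ := exists_tau_witness G hG
  have hp : Piercing (S ∪ T) (F ∪ G) := by
    intro B hB
    rcases Finset.mem_union.1 hB with h | h
    · obtain ⟨p, hp, hpB⟩ := hSp B h
      exact ⟨p, Finset.mem_union_left _ hp, hpB⟩
    · obtain ⟨p, hp, hpB⟩ := hTp B h
      exact ⟨p, Finset.mem_union_right _ hp, hpB⟩
  calc tau (F ∪ G) ≤ (S ∪ T).card := tau_le_card hp
    _ ≤ S.card + T.card := Finset.card_union_le _ _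
    _ = tau F + tau G := by rw [hSc, hTc]

end basics

/-- An axis-parallel box in ℝ^d : a product of d nonempty closed intervals. -/
def IsBox (d : ℕ) (B : Set (Fin d → ℝ)) : Prop :=
  ∃ l u : Fin d → ℝ, l ≤ u ∧ B = Set.Icc l u



section boxes
variable {d e : ℕ} {B : Set (Fin d → ℝ)}

open Classical in
noncomputable def lo (B : Set (Fin d → ℝ)) : Fin d → ℝ :=
  if h : IsBox d B then h.choose else 0

open Classical in
noncomputable def hi (B : Set (Fin d → ℝ)) : Fin d → ℝ :=
  if h : IsBox d B then h.choose_spec.choose else 0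

lemma lo_le_hi (h : IsBox d B) : lo B ≤ hi B := by
  rw [lo, hi, dif_pos h, dif_pos h]; exact h.choose_spec.choose_spec.1

lemma box_eq (h : IsBox d B) : B = Set.Icc (lo B) (hi B) := by
  rw [lo, hi, dif_pos h, dif_pos h]; exact h.choose_spec.choose_spec.2

lemma box_nonempty (h : IsBox d B) : B.Nonempty := by
  rw [box_eq h]; exact Set.nonempty_Icc.2 (lo_le_hi h)

lemma mem_box_iff (h : IsBox d B) {x : Fin d → ℝ} :
    x ∈ B ↔ lo B ≤ x ∧ x ≤ hi B := by
  conv_lhs => rw [box_eq h]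
  exact Set.mem_Icc

lemma coord_le (h : IsBox d B) {x : Fin d → ℝ} (hx : x ∈ B) (i : Fin d) :
    lo B i ≤ x i ∧ x i ≤ hi B i :=
  ⟨((mem_box_iff h).1 hx).1 i, ((mem_box_iff h).1 hx).2 i⟩

lemma hi_mem (h : IsBox d B) : hi B ∈ B := by
  rw [mem_box_iff h]; exact ⟨lo_le_hi h, le_refl _⟩

lemma lo_mem (h : IsBox d B) : lo B ∈ B := by
  rw [mem_box_iff h]; exact ⟨le_refl _, lo_le_hi h⟩

variable {C : Set (Fin (e + 1) → ℝ)} {a : ℝ}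

lemma slide_mem (h : IsBox (e+1) C) {x : Fin (e+1) → ℝ} (hx : x ∈ C)
    (hla : lo C 0 ≤ a) (hau : a ≤ hi C 0) : Fin.cons a (Fin.tail x) ∈ C := by
  rw [mem_box_iff h] at hx ⊢
  constructor <;> intro i <;> refine Fin.cases ?_ (fun j => ?_) i
  · simpa using hla
  · simpa [Fin.tail] using hx.1 j.succ
  · simpa using hau
  · simpa [Fin.tail] using hx.2 j.succ

lemma sigma_box (h : IsBox (e+1) C) (hla : lo C 0 ≤ a) (hau : a ≤ hi C 0) :
    {y : Fin e → ℝ | Fin.cons a y ∈ C} =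
      Set.Icc (Fin.tail (lo C)) (Fin.tail (hi C)) := by
  ext y
  rw [Set.mem_setOf_eq, mem_box_iff h, Set.mem_Icc]
  constructor
  · rintro ⟨h1, h2⟩
    exact ⟨fun j => by simpa [Fin.tail] using h1 j.succ,
           fun j => by simpa [Fin.tail] using h2 j.succ⟩
  · rintro ⟨h1, h2⟩
    constructor <;> intro i <;> refine Fin.cases ?_ (fun j => ?_) i
    · simpa using hla
    · simpa [Fin.tail] using h1 j
    · simpa using hau
    · simpa [Fin.tail] using h2 j

lemma sigma_isBox (h : IsBox (e+1) C) (hla : lo C 0 ≤ a) (hau : a ≤ hi C 0) :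
    IsBox e {y : Fin e → ℝ | Fin.cons a y ∈ C} :=
  ⟨Fin.tail (lo C), Fin.tail (hi C), fun j => lo_le_hi h j.succ,
    sigma_box h hla hau⟩

end boxes

/-- `f n d` : the supremum of τ over finite families of boxes in ℝ^d with ν ≤ n. -/
noncomputable def fBox (n d : ℕ) : ℕ :=
  sSup {t | ∃ F : Finset (Set (Fin d → ℝ)),
    (∀ B ∈ F, IsBox d B) ∧ nu F ≤ n ∧ tau F = t}

def fSet (n d : ℕ) : Set ℕ :=
  {t | ∃ F : Finset (Set (Fin d → ℝ)),
    (∀ B ∈ F, IsBox d B) ∧ nu F ≤ n ∧ tau F = t}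

lemma fBox_eq (n d : ℕ) : fBox n d = sSup (fSet n d) := rfl

lemma nu_empty {α : Type*} : nu (∅ : Finset (Set α)) = 0 := by
  refine Nat.le_zero.1 (csSup_le (nuSet_nonempty _) ?_)
  rintro m ⟨G, hG, rfl, -⟩
  simp [Finset.subset_empty.1 hG]

lemma tau_empty {α : Type*} : tau (∅ : Finset (Set α)) = 0 :=
  Nat.le_zero.1 (tau_le_card (S := ∅) (fun B hB => by simp at hB))

lemma fSet_nonempty (n d : ℕ) : (fSet n d).Nonempty :=
  ⟨0, ∅, by simp, by simp [nu_empty], tau_empty⟩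

lemma fSet_mono {m n d : ℕ} (h : m ≤ n) : fSet m d ⊆ fSet n d := by
  rintro t ⟨F, hbox, hnu, rfl⟩
  exact ⟨F, hbox, hnu.trans h, rfl⟩

/-- lifting: any value of τ realized in dimension e is realized in dimension e+1 -/
lemma fSet_lift {n e : ℕ} : fSet n e ⊆ fSet n (e + 1) := by
  classical
  rintro t ⟨F', hbox', hnu', rfl⟩
  set φ : Set (Fin e → ℝ) → Set (Fin (e+1) → ℝ) :=
    fun B => {x | x 0 = 0 ∧ Fin.tail x ∈ B} with hφ
  have hφinj : Function.Injective φ := by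
    intro B B' h
    ext y
    have : (Fin.cons 0 y ∈ φ B) ↔ (Fin.cons 0 y ∈ φ B') := by rw [h]
    simpa [hφ, Fin.tail_cons] using this
  have hφmem : ∀ (B : Set (Fin e → ℝ)) (x : Fin (e+1) → ℝ),
      x ∈ φ B ↔ x 0 = 0 ∧ Fin.tail x ∈ B := fun _ _ => Iff.rfl
  refine ⟨F'.image φ, ?_, ?_, ?_⟩
  · rintro B hB
    obtain ⟨C, hC, rfl⟩ := Finset.mem_image.1 hB
    obtain ⟨l, u, hlu, rfl⟩ := hbox' C hC
    refine ⟨Fin.cons 0 l, Fin.cons 0 u, ?_, ?_⟩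
    · intro i
      refine Fin.cases ?_ (fun j => ?_) i
      · simp
      · simp [hlu j]
    · ext x
      simp only [hφmem, Set.mem_Icc]
      constructor
      · rintro ⟨h0, h1, h2⟩
        constructor <;> intro i <;> refine Fin.cases ?_ (fun j => ?_) i
        · simp [h0]
        · simpa [Fin.tail] using h1 j
        · simp [h0]
        · simpa [Fin.tail] using h2 j
      · rintro ⟨h1, h2⟩
        have h0 : x 0 = 0 := le_antisymm (by simpa using h2 0) (by simpa using h1 0)
        exact ⟨h0, fun j => by simpa [Fin.tail] using h1 j.succ,
               fun j => by simpa [Fin.tail] using h2 j.succ⟩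
  · -- nu (image) ≤ n
    obtain ⟨G, hG, hcard, hdisj⟩ := exists_nu_witness (F'.image φ)
    obtain ⟨G', hG', rfl⟩ := Finset.subset_image_iff.1 hG
    rw [← hcard, Finset.card_image_of_injective _ hφinj]
    refine le_trans (le_nu hG' ?_) hnu'
    intro B hB B' hB' hne
    simp only [Function.onFun, id_eq]
    have : Disjoint (φ B) (φ B') := by
      refine hdisj (by exact_mod_cast Finset.mem_image_of_mem φ hB)
        (by exact_mod_cast Finset.mem_image_of_mem φ hB') (fun h => hne (hφinj h))
    rw [Set.disjoint_left] at this ⊢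
    intro y hy hy'
    exact this (a := Fin.cons 0 y) (by simp [hφ, Fin.tail_cons, hy])
      (by simp [hφ, Fin.tail_cons, hy'])
  · -- tau equal
    have hne' : ∀ B ∈ F', B.Nonempty := fun B hB => box_nonempty (hbox' B hB)
    have hne : ∀ B ∈ F'.image φ, B.Nonempty := by
      rintro B hB
      obtain ⟨C, hC, rfl⟩ := Finset.mem_image.1 hB
      obtain ⟨y, hy⟩ := hne' C hC
      exact ⟨Fin.cons 0 y, by simp [hφ, Fin.tail_cons, hy]⟩
    apply le_antisymm
    · obtain ⟨S, hSc, hSp⟩ := exists_tau_witness F' hne'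
      refine le_trans (tau_le_card (S := S.image (Fin.cons 0)) ?_) (by
        rw [← hSc]; exact Finset.card_image_le)
      rintro B hB
      obtain ⟨C, hC, rfl⟩ := Finset.mem_image.1 hB
      obtain ⟨p, hp, hpC⟩ := hSp C hC
      exact ⟨Fin.cons 0 p, Finset.mem_image_of_mem _ hp, by simp [hφ, Fin.tail_cons, hpC]⟩
    · obtain ⟨S, hSc, hSp⟩ := exists_tau_witness (F'.image φ) hne
      refine le_trans (tau_le_card (S := S.image Fin.tail) ?_) (by
        rw [← hSc]; exact Finset.card_image_le)
      rintro C hC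
      obtain ⟨p, hp, hpC⟩ := hSp (φ C) (Finset.mem_image_of_mem φ hC)
      exact ⟨Fin.tail p, Finset.mem_image_of_mem _ hp, hpC.2⟩
lemma core_bound {n k e : ℕ} (hk : k ≤ n - 2) (hn : 2 ≤ n)
    (h1 : BddAbove (fSet k (e+1))) (h2 : BddAbove (fSet (n - k - 1) (e+1)))
    (h3 : BddAbove (fSet n e))
    (F : Finset (Set (Fin (e+1) → ℝ))) (hbox : ∀ B ∈ F, IsBox (e+1) B)
    (hnu : nu F ≤ n) :
    tau F ≤ fBox k (e+1) + fBox (n - k - 1) (e+1) + fBox n e := by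
  classical
  by_cases hcase : nu F ≤ k
  · have : tau F ≤ fBox k (e+1) := le_csSup h1 ⟨F, hbox, hcase, rfl⟩
    omega
  push_neg at hcase
  have hFne : F.Nonempty := by
    by_contra h
    rw [Finset.not_nonempty_iff_eq_empty] at h
    rw [h, nu_empty] at hcase; omega
  set L : ℝ → Finset (Set (Fin (e+1) → ℝ)) :=
    fun t => F.filter (fun B => hi B 0 < t) with hL
  set S : Set ℝ := {t | nu (L t) ≤ k} with hS
  have hSne : S.Nonempty := by
    refine ⟨F.inf' hFne (fun B => lo B 0), ?_⟩
    have hLe : L (F.inf' hFne (fun B => lo B 0)) = ∅ := by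
      rw [Finset.eq_empty_iff_forall_notMem]
      intro B hB
      rw [hL, Finset.mem_filter] at hB
      have h1 := Finset.inf'_le (fun B => lo B 0) hB.1
      have h2 := lo_le_hi (hbox B hB.1) 0
      linarith [hB.2]
    show nu _ ≤ k
    rw [hLe, nu_empty]; exact Nat.zero_le _
  have hSbdd : BddAbove S := by
    refine ⟨F.sup' hFne (fun B => hi B 0), ?_⟩
    intro t ht
    by_contra hlt
    push_neg at hlt
    have hLF : L t = F := by
      rw [hL]
      refine Finset.filter_true_of_mem ?_
      intro B hB
      have := Finset.le_sup' (fun B => hi B 0) hB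
      linarith
    rw [hS, Set.mem_setOf_eq, hLF] at ht
    omega
  set a : ℝ := sSup S with ha
  -- independence number of the left part
  have hLa : nu (L a) ≤ k := by
    by_cases hLe : L a = ∅
    · rw [hLe, nu_empty]; exact Nat.zero_le _
    · have hLne : (L a).Nonempty := Finset.nonempty_of_ne_empty hLe
      have ht₁ : (L a).sup' hLne (fun B => hi B 0) < a := by
        rw [Finset.sup'_lt_iff]
        intro B hB
        exact (Finset.mem_filter.1 hB).2
      obtain ⟨t, htS, ht⟩ := exists_lt_of_lt_csSup hSne ht₁
      have hsub : L a ⊆ L t := by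
        intro B hB
        rw [hL, Finset.mem_filter]
        have hBF := (Finset.mem_filter.1 hB).1
        refine ⟨hBF, ?_⟩
        have := Finset.le_sup' (fun B => hi B 0) hB
        linarith
      exact le_trans (nu_mono hsub) htS
  set R : Finset (Set (Fin (e+1) → ℝ)) :=
    F.filter (fun B => a < lo B 0) with hR
  set M : Finset (Set (Fin (e+1) → ℝ)) :=
    F.filter (fun B => lo B 0 ≤ a ∧ a ≤ hi B 0) with hM
  -- independence number of the right part
  have hRa : nu R ≤ n - k - 1 := by
    by_cases hRe : R = ∅
    · rw [hRe, nu_empty]; exact Nat.zero_le _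
    · have hRne : R.Nonempty := Finset.nonempty_of_ne_empty hRe
      set a' : ℝ := R.inf' hRne (fun B => lo B 0) with ha'
      have haa' : a < a' := by
        rw [ha', Finset.lt_inf'_iff]
        intro B hB
        exact (Finset.mem_filter.1 hB).2
      set t : ℝ := (a + a') / 2 with htdef
      have hat : a < t := by rw [htdef]; linarith
      have hta' : t < a' := by rw [htdef]; linarith
      have htnS : t ∉ S := fun h => absurd (le_csSup hSbdd h) (not_le.2 hat)
      have hkLt : k < nu (L t) := by
        by_contra h
        push_neg at h
        exact htnS h
      obtain ⟨G, hGsub, hGcard, hGdisj⟩ := exists_nu_witness (L t)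
      obtain ⟨G', hG'sub, hG'card⟩ := Finset.exists_subset_card_eq (s := G) (n := k+1) (by omega)
      obtain ⟨H, hHsub, hHcard, hHdisj⟩ := exists_nu_witness R
      have cross : ∀ B ∈ G', ∀ C ∈ H, Disjoint B C := by
        intro B hB C hC
        have hBL : B ∈ L t := hGsub (hG'sub hB)
        have hBF : B ∈ F := (Finset.mem_filter.1 hBL).1
        have hBt : hi B 0 < t := (Finset.mem_filter.1 hBL).2
        have hCR : C ∈ R := hHsub hC
        have hCF : C ∈ F := (Finset.mem_filter.1 hCR).1
        have hCa' : a' ≤ lo C 0 := by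
          rw [ha']; exact Finset.inf'_le _ hCR
        rw [Set.disjoint_left]
        intro x hxB hxC
        have e1 := (coord_le (hbox B hBF) hxB 0).2
        have e2 := (coord_le (hbox C hCF) hxC 0).1
        linarith
      have hGH : Disjoint G' H := by
        rw [Finset.disjoint_left]
        intro B hBG hBH
        have hd := cross B hBG B hBH
        have hBF : B ∈ F := (Finset.mem_filter.1 (hHsub hBH)).1
        obtain ⟨x, hx⟩ := box_nonempty (hbox B hBF)
        exact Set.disjoint_left.1 hd hx hx
      have hUdisj : ((G' ∪ H : Finset _) : Set (Set (Fin (e+1) → ℝ))).PairwiseDisjoint id := by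
        intro B hB C hC hne
        simp only [Finset.coe_union, Set.mem_union, Finset.mem_coe] at hB hC
        simp only [Function.onFun, id_eq]
        rcases hB with hB | hB <;> rcases hC with hC | hC
        · exact hGdisj (Finset.mem_coe.2 (hG'sub hB)) (Finset.mem_coe.2 (hG'sub hC)) hne
        · exact cross B hB C hC
        · exact (cross C hC B hB).symm
        · exact hHdisj (Finset.mem_coe.2 hB) (Finset.mem_coe.2 hC) hne
      have hUsub : G' ∪ H ⊆ F := by
        intro B hB
        rcases Finset.mem_union.1 hB with h | h
        · exact (Finset.mem_filter.1 (hGsub (hG'sub h))).1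
        · exact (Finset.mem_filter.1 (hHsub h)).1
      have hcard : (G' ∪ H).card = (k+1) + nu R := by
        rw [Finset.card_union_of_disjoint hGH, hG'card, hHcard]
      have hle : (k+1) + nu R ≤ n := by
        rw [← hcard]
        exact le_trans (le_nu hUsub hUdisj) hnu
      omega
  -- the middle part, via cross-sections
  set σ : Set (Fin (e+1) → ℝ) → Set (Fin e → ℝ) :=
    fun C => {y | Fin.cons a y ∈ C} with hσ
  set F' : Finset (Set (Fin e → ℝ)) := M.image σ with hF'
  have hMspec : ∀ C ∈ M, IsBox (e+1) C ∧ lo C 0 ≤ a ∧ a ≤ hi C 0 := by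
    intro C hC
    have h := Finset.mem_filter.1 hC
    exact ⟨hbox C h.1, h.2⟩
  have hF'box : ∀ B ∈ F', IsBox e B := by
    intro B hB
    obtain ⟨C, hC, rfl⟩ := Finset.mem_image.1 hB
    obtain ⟨hCb, hla, hau⟩ := hMspec C hC
    exact sigma_isBox hCb hla hau
  have hF'nu : nu F' ≤ n := by
    obtain ⟨G₁, hG₁sub, hG₁card, hG₁disj⟩ := exists_nu_witness F'
    have hpre : ∀ C : {C // C ∈ G₁}, ∃ B ∈ M, σ B = C.1 :=
      fun C => Finset.mem_image.1 (hG₁sub C.2)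
    set g : {C // C ∈ G₁} → Set (Fin (e+1) → ℝ) :=
      fun c => (hpre c).choose with hg
    have hgmem : ∀ c, g c ∈ M := fun c => (hpre c).choose_spec.1
    have hgσ : ∀ c, σ (g c) = c.1 := fun c => (hpre c).choose_spec.2
    have hginj : Function.Injective g := by
      intro c c' h
      apply Subtype.ext
      rw [← hgσ c, ← hgσ c', h]
    set G₀ : Finset (Set (Fin (e+1) → ℝ)) := G₁.attach.image g with hG₀
    have hG₀card : G₀.card = G₁.card := by
      rw [hG₀, Finset.card_image_of_injective _ hginj, Finset.card_attach]
    have hG₀sub : G₀ ⊆ F := by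
      intro B hB
      obtain ⟨c, -, rfl⟩ := Finset.mem_image.1 hB
      exact (Finset.mem_filter.1 (hgmem c)).1
    have hG₀disj : (G₀ : Set (Set (Fin (e+1) → ℝ))).PairwiseDisjoint id := by
      intro B hB C hC hne
      simp only [Finset.mem_coe, hG₀] at hB hC
      obtain ⟨c, -, rfl⟩ := Finset.mem_image.1 hB
      obtain ⟨c', -, rfl⟩ := Finset.mem_image.1 hC
      have hcc : c.1 ≠ c'.1 := by
        intro h
        exact hne (by rw [Subtype.ext h])
      have hdis : Disjoint c.1 c'.1 :=
        hG₁disj (Finset.mem_coe.2 c.2) (Finset.mem_coe.2 c'.2) hcc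
      simp only [Function.onFun, id_eq]
      rw [Set.disjoint_left]
      intro x hx hx'
      obtain ⟨hb, hla, hau⟩ := hMspec _ (hgmem c)
      obtain ⟨hb', hla', hau'⟩ := hMspec _ (hgmem c')
      have m1 : Fin.cons a (Fin.tail x) ∈ g c := slide_mem hb hx hla hau
      have m2 : Fin.cons a (Fin.tail x) ∈ g c' := slide_mem hb' hx' hla' hau'
      have s1 : Fin.tail x ∈ σ (g c) := m1
      have s2 : Fin.tail x ∈ σ (g c') := m2
      rw [hgσ c] at s1
      rw [hgσ c'] at s2
      exact Set.disjoint_left.1 hdis s1 s2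
    calc nu F' = G₁.card := hG₁card.symm
      _ = G₀.card := hG₀card.symm
      _ ≤ nu F := le_nu hG₀sub hG₀disj
      _ ≤ n := hnu
  have hMne : ∀ B ∈ M, B.Nonempty :=
    fun B hB => box_nonempty (hbox B (Finset.mem_filter.1 hB).1)
  have hF'ne : ∀ B ∈ F', B.Nonempty := by
    intro B hB
    exact box_nonempty (hF'box B hB)
  have htauM : tau M ≤ tau F' := by
    obtain ⟨S', hS'c, hS'p⟩ := exists_tau_witness F' hF'ne
    refine le_trans (tau_le_card (S := S'.image (Fin.cons a)) ?_)
      (by rw [← hS'c]; exact Finset.card_image_le)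
    intro C hC
    obtain ⟨y, hy, hyC⟩ := hS'p (σ C) (Finset.mem_image_of_mem σ hC)
    exact ⟨Fin.cons a y, Finset.mem_image_of_mem _ hy, hyC⟩
  -- assembling
  have hFsub : F ⊆ L a ∪ (M ∪ R) := by
    intro B hB
    rcases lt_or_ge (hi B 0) a with h | h
    · exact Finset.mem_union_left _ (Finset.mem_filter.2 ⟨hB, h⟩)
    rcases lt_or_ge a (lo B 0) with h' | h'
    · exact Finset.mem_union_right _ (Finset.mem_union_right _ (Finset.mem_filter.2 ⟨hB, h'⟩))
    · exact Finset.mem_union_right _ (Finset.mem_union_left _ (Finset.mem_filter.2 ⟨hB, h', h⟩))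
  have hUne : ∀ B ∈ L a ∪ (M ∪ R), B.Nonempty := by
    intro B hB
    have hBF : B ∈ F := by
      rcases Finset.mem_union.1 hB with h | h
      · exact (Finset.mem_filter.1 h).1
      rcases Finset.mem_union.1 h with h | h
      · exact (Finset.mem_filter.1 h).1
      · exact (Finset.mem_filter.1 h).1
    exact box_nonempty (hbox B hBF)
  have hLne' : ∀ B ∈ L a, B.Nonempty :=
    fun B hB => box_nonempty (hbox B (Finset.mem_filter.1 hB).1)
  have hRne' : ∀ B ∈ R, B.Nonempty :=
    fun B hB => box_nonempty (hbox B (Finset.mem_filter.1 hB).1)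
  have hMRne : ∀ B ∈ M ∪ R, B.Nonempty := by
    intro B hB
    rcases Finset.mem_union.1 hB with h | h
    · exact hMne B h
    · exact hRne' B h
  have step1 : tau F ≤ tau (L a ∪ (M ∪ R)) := tau_mono hFsub hUne
  have step2 : tau (L a ∪ (M ∪ R)) ≤ tau (L a) + tau (M ∪ R) :=
    tau_union_le hLne' hMRne
  have step3 : tau (M ∪ R) ≤ tau M + tau R := tau_union_le hMne hRne'
  have bL : tau (L a) ≤ fBox k (e+1) :=
    le_csSup h1 ⟨L a, fun B hB => hbox B (Finset.mem_filter.1 hB).1, hLa, rfl⟩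
  have bR : tau R ≤ fBox (n - k - 1) (e+1) :=
    le_csSup h2 ⟨R, fun B hB => hbox B (Finset.mem_filter.1 hB).1, hRa, rfl⟩
  have bM : tau F' ≤ fBox n e := le_csSup h3 ⟨F', hF'box, hF'nu, rfl⟩
  omega

/-- Proposition 1 (Fon-Der-Flaass–Kostochka): for n ≥ 2, d ≥ 2 and every
0 ≤ k ≤ n-2, f(n,d) ≤ f(k,d) + f(n-k-1,d) + f(n,d-1). -/
theorem fBox_recursion (n d : ℕ) (hn : 2 ≤ n) (hd : 2 ≤ d)
    (k : ℕ) (hk : k ≤ n - 2) :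
    fBox n d ≤ fBox k d + fBox (n - k - 1) d + fBox n (d - 1) := by
  obtain ⟨e, rfl⟩ : ∃ e, d = e + 1 := ⟨d - 1, by omega⟩
  simp only [Nat.add_sub_cancel]
  rcases em (BddAbove (fSet k (e+1))) with h1 | h1
  · rcases em (BddAbove (fSet (n - k - 1) (e+1))) with h2 | h2
    · rcases em (BddAbove (fSet n e)) with h3 | h3
      · rw [fBox_eq n (e+1)]
        refine csSup_le (fSet_nonempty _ _) ?_
        rintro t ⟨F, hbox, hnu, rfl⟩
        exact core_bound hk hn h1 h2 h3 F hbox hnu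
      · have hnb : ¬ BddAbove (fSet n (e+1)) :=
          fun hb => h3 (hb.mono fSet_lift)
        have hz : fBox n (e+1) = 0 := by
          rw [fBox_eq, csSup_of_not_bddAbove hnb, csSup_empty]; rfl
        rw [hz]; exact Nat.zero_le _
    · have hnb : ¬ BddAbove (fSet n (e+1)) :=
        fun hb => h2 (hb.mono (fSet_mono (by omega)))
      have hz : fBox n (e+1) = 0 := by
        rw [fBox_eq, csSup_of_not_bddAbove hnb, csSup_empty]; rfl
      rw [hz]; exact Nat.zero_le _
  · have hnb : ¬ BddAbove (fSet n (e+1)) :=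
      fun hb => h1 (hb.mono (fSet_mono (by omega)))
    have hz : fBox n (e+1) = 0 := by
      rw [fBox_eq, csSup_of_not_bddAbove hnb, csSup_empty]; rfl
    rw [hz]; exact Nat.zero_le _
end

section
/- The bound of the two-line lemma is sharp: for every n ≥ 1 there exists a finite family 𝓑 of axis-parallel rectangles in ℝ², and two horizontal lines l₁, l₂ such that every rectangle meets at least one of them, with ν(𝓑) = n and τ(𝓑) = ⌊3n/2⌋. -/
set_option synthInstance.maxSize 1000 in
lemma indep5 : ∀ u : Finset (Fin 5),
    ¬((0:Fin 5) ∈ u ∧ (1:Fin 5) ∈ u) → ¬((1:Fin 5) ∈ u ∧ (2:Fin 5) ∈ u) → ¬((2:Fin 5) ∈ u ∧ (3:Fin 5) ∈ u) →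
    ¬((3:Fin 5) ∈ u ∧ (4:Fin 5) ∈ u) → ¬((4:Fin 5) ∈ u ∧ (0:Fin 5) ∈ u) → u.card ≤ 2 := by decide

set_option synthInstance.maxSize 1000 in
lemma cover5 : ∀ u : Finset (Fin 5),
    ¬((0:Fin 5) ∈ u ∧ (2:Fin 5) ∈ u) → ¬((0:Fin 5) ∈ u ∧ (3:Fin 5) ∈ u) → ¬((1:Fin 5) ∈ u ∧ (3:Fin 5) ∈ u) →
    ¬((1:Fin 5) ∈ u ∧ (4:Fin 5) ∈ u) → ¬((2:Fin 5) ∈ u ∧ (4:Fin 5) ∈ u) → u.card ≤ 2 := by decide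


open scoped Classical

noncomputable section TwoLine

abbrev V2 := Fin 2 → ℝ

def rect (a b c d : ℝ) : Set V2 := {p | a ≤ p 0 ∧ p 0 ≤ b ∧ c ≤ p 1 ∧ p 1 ≤ d}

def pt (x y : ℝ) : V2 := ![x, y]

@[simp] lemma pt_zero (x y : ℝ) : pt x y 0 = x := rfl
@[simp] lemma pt_one (x y : ℝ) : pt x y 1 = y := rfl

@[simp] lemma mem_rect {a b c d : ℝ} {p : V2} :
    p ∈ rect a b c d ↔ a ≤ p 0 ∧ p 0 ≤ b ∧ c ≤ p 1 ∧ p 1 ≤ d := Iff.rfl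

lemma pt_inj {x y x' y' : ℝ} (h : pt x y = pt x' y') : x = x' ∧ y = y' :=
  ⟨congrFun h 0, congrFun h 1⟩

lemma isBox_rect {a b c d : ℝ} (h1 : a ≤ b) (h2 : c ≤ d) : IsBox 2 (rect a b c d) := by
  refine ⟨![a, c], ![b, d], ?_, ?_⟩
  · intro i; fin_cases i <;> simpa
  · ext p
    simp [rect, Set.mem_Icc, Pi.le_def, Fin.forall_fin_two]
    tauto

lemma rect_disj_x {a b c d a' b' c' d' : ℝ} (h : b < a') :
    Disjoint (rect a b c d) (rect a' b' c' d') := by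
  rw [Set.disjoint_left]; rintro p ⟨_, h1, _⟩ ⟨h2, _⟩; linarith

lemma rect_disj_y {a b c d a' b' c' d' : ℝ} (h : d < c') :
    Disjoint (rect a b c d) (rect a' b' c' d') := by
  rw [Set.disjoint_left]; rintro p ⟨_, _, _, h1⟩ ⟨_, _, h2, _⟩; linarith

lemma ne_of_disj {s t : Set V2} {p : V2} (h : Disjoint s t) (hp : p ∈ s) : s ≠ t := by
  rintro rfl; exact Set.disjoint_left.mp h hp hp

lemma ne_of_mem_not_mem {s t : Set V2} {p : V2} (hp : p ∈ s) (hq : p ∉ t) : s ≠ t := by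
  rintro rfl; exact hq hp

/-- The five rectangles of the gadget shifted to x-offset `10k`. -/
def R (k : ℕ) : Fin 5 → Set V2 :=
  ![rect (10*k) (10*k+3) 6 7,
    rect (10*k+3) (10*k+4) 3 7,
    rect (10*k+2) (10*k+4) 0 3,
    rect (10*k) (10*k+2) 0 1,
    rect (10*k) (10*k+1) 1 7]

def Ex (m : ℕ) : Set V2 := rect (10*m) (10*m+1) 0 1

lemma R0 (k : ℕ) : R k 0 = rect (10*k) (10*k+3) 6 7 := rfl
lemma R1 (k : ℕ) : R k 1 = rect (10*k+3) (10*k+4) 3 7 := rfl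
lemma R2 (k : ℕ) : R k 2 = rect (10*k+2) (10*k+4) 0 3 := rfl
lemma R3 (k : ℕ) : R k 3 = rect (10*k) (10*k+2) 0 1 := rfl
lemma R4 (k : ℕ) : R k 4 = rect (10*k) (10*k+1) 1 7 := rfl

section Facts
variable (k : ℕ)

lemma R_xbounds {k : ℕ} {i : Fin 5} {p : V2} (hp : p ∈ R k i) :
    (10*k : ℝ) ≤ p 0 ∧ p 0 ≤ 10*k + 4 := by
  fin_cases i <;>
    · simp only [R0, R1, R2, R3, R4, mem_rect] at hp
      constructor <;> linarith [hp.1, hp.2.1]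

lemma Ex_xbounds {m : ℕ} {p : V2} (hp : p ∈ Ex m) : (10*m : ℝ) ≤ p 0 :=
  hp.1

lemma cast_lt {k k' : ℕ} (h : k < k') : (10*k + 4 : ℝ) < 10*k' := by
  have : (k : ℝ) + 1 ≤ k' := by exact_mod_cast h
  linarith

lemma R_disj_cross {k k' : ℕ} (h : k < k') (i i' : Fin 5) :
    Disjoint (R k i) (R k' i') := by
  rw [Set.disjoint_left]
  intro p hp hp'
  have h1 := (R_xbounds hp).2
  have h2 := (R_xbounds hp').1
  have := cast_lt h
  linarith

lemma Ex_disj {k m : ℕ} (h : k < m) (i : Fin 5) : Disjoint (R k i) (Ex m) := by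
  rw [Set.disjoint_left]
  intro p hp hp'
  have h1 := (R_xbounds hp).2
  have h2 := Ex_xbounds hp'
  have := cast_lt h
  linarith

-- nonadjacent disjointness (C5: edges are consecutive pairs)
lemma disj02 : Disjoint (R k 0) (R k 2) := by rw [R0, R2]; exact (rect_disj_y (by norm_num)).symm
lemma disj03 : Disjoint (R k 0) (R k 3) := by rw [R0, R3]; exact (rect_disj_y (by norm_num)).symm
lemma disj13 : Disjoint (R k 1) (R k 3) := by
  rw [R1, R3]; exact (rect_disj_x (by norm_num)).symm
lemma disj14 : Disjoint (R k 1) (R k 4) := by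
  rw [R1, R4]; exact (rect_disj_x (by norm_num)).symm
lemma disj24 : Disjoint (R k 2) (R k 4) := by
  rw [R2, R4]; exact (rect_disj_x (by norm_num)).symm

-- adjacent witness points
lemma w01 : pt (10*k+3) 6 ∈ R k 0 ∩ R k 1 := by
  constructor <;> simp [R0, R1] <;> norm_num
lemma w12 : pt (10*k+3) 3 ∈ R k 1 ∩ R k 2 := by
  constructor <;> simp [R1, R2] <;> norm_num
lemma w23 : pt (10*k+2) 0 ∈ R k 2 ∩ R k 3 := by
  constructor <;> simp [R2, R3] <;> norm_num
lemma w34 : pt (10*k) 1 ∈ R k 3 ∩ R k 4 := by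
  constructor <;> simp [R3, R4] <;> norm_num
lemma w40 : pt (10*k) 6 ∈ R k 4 ∩ R k 0 := by
  constructor <;> simp [R4, R0] <;> norm_num

end Facts
section Inj
variable (k : ℕ)

lemma n01 : R k 0 ≠ R k 1 :=
  ne_of_mem_not_mem (p := pt (10*k) 6)
    (by simp only [R0, mem_rect, pt_zero, pt_one]; norm_num)
    (by simp only [R1, mem_rect, pt_zero, pt_one]; rintro ⟨h1, -⟩; linarith)

lemma n12 : R k 1 ≠ R k 2 :=
  ne_of_mem_not_mem (p := pt (10*k+3) 7)
    (by simp only [R1, mem_rect, pt_zero, pt_one]; norm_num)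
    (by simp only [R2, mem_rect, pt_zero, pt_one]; rintro ⟨-, -, -, h⟩; linarith)

lemma n23 : R k 2 ≠ R k 3 :=
  ne_of_mem_not_mem (p := pt (10*k+3) 0)
    (by simp only [R2, mem_rect, pt_zero, pt_one]; norm_num)
    (by simp only [R3, mem_rect, pt_zero, pt_one]; rintro ⟨-, h, -⟩; linarith)

lemma n34 : R k 3 ≠ R k 4 :=
  ne_of_mem_not_mem (p := pt (10*k+2) 0)
    (by simp only [R3, mem_rect, pt_zero, pt_one]; norm_num)
    (by simp only [R4, mem_rect, pt_zero, pt_one]; rintro ⟨-, -, h, -⟩; linarith)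

lemma n04 : R k 0 ≠ R k 4 :=
  ne_of_mem_not_mem (p := pt (10*k+3) 6)
    (by simp only [R0, mem_rect, pt_zero, pt_one]; norm_num)
    (by simp only [R4, mem_rect, pt_zero, pt_one]; rintro ⟨-, h, -⟩; linarith)

lemma R_inj : Function.Injective (R k) := by
  have key : ∀ i j : Fin 5, i < j → R k i ≠ R k j := by
    intro i j hij
    fin_cases i <;> fin_cases j <;>
      first
      | exact absurd hij (by decide)
      | exact n01 k
      | exact ne_of_disj (disj02 k) (w01 k).1
      | exact ne_of_disj (disj03 k) (w01 k).1
      | exact n04 k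
      | exact n12 k
      | exact ne_of_disj (disj13 k) (w12 k).1
      | exact ne_of_disj (disj14 k) (w12 k).1
      | exact n23 k
      | exact ne_of_disj (disj24 k) (w23 k).1
      | exact n34 k
  intro i j h
  rcases lt_trichotomy i j with hij | hij | hij
  · exact absurd h (key i j hij)
  · exact hij
  · exact absurd h.symm (key j i hij)

end Inj
section Comb

/-- any point lies in at most two of the five gadget rectangles -/
lemma point_in_le_two (k : ℕ) (p : V2) :
    (Finset.univ.filter (fun i : Fin 5 => p ∈ R k i)).card ≤ 2 := by
  set u := Finset.univ.filter (fun i : Fin 5 => p ∈ R k i) with hu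
  have hmem : ∀ i : Fin 5, i ∈ u ↔ p ∈ R k i := by
    intro i; simp [hu]
  have key : ∀ (i j : Fin 5), Disjoint (R k i) (R k j) → ¬(i ∈ u ∧ j ∈ u) := by
    rintro i j hd ⟨hi, hj⟩
    exact Set.disjoint_left.mp hd ((hmem i).mp hi) ((hmem j).mp hj)
  exact cover5 u (key _ _ (disj02 k)) (key _ _ (disj03 k)) (key _ _ (disj13 k))
    (key _ _ (disj14 k)) (key _ _ (disj24 k))

/-- any pairwise disjoint subfamily of the gadget has at most two members -/
lemma gadget_indep (k : ℕ) (t : Finset (Set V2))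
    (ht : t ⊆ Finset.image (R k) Finset.univ)
    (hd : (t : Set (Set V2)).PairwiseDisjoint id) : t.card ≤ 2 := by
  set u := Finset.univ.filter (fun i : Fin 5 => R k i ∈ t) with hu
  have himg : t = u.image (R k) := by
    ext s
    simp only [Finset.mem_image, hu, Finset.mem_filter, Finset.mem_univ, true_and]
    constructor
    · intro hs
      obtain ⟨i, -, rfl⟩ := Finset.mem_image.mp (ht hs)
      exact ⟨i, hs, rfl⟩
    · rintro ⟨i, hi, rfl⟩; exact hi
  have hcard : t.card = u.card := by
    rw [himg, Finset.card_image_of_injective _ (R_inj k)]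
  have hij : ∀ (i j : Fin 5), i ≠ j → (∃ p, p ∈ R k i ∩ R k j) → ¬(i ∈ u ∧ j ∈ u) := by
    rintro i j hne ⟨p, hp⟩ ⟨hi, hj⟩
    rw [hu, Finset.mem_filter] at hi hj
    have hRne : R k i ≠ R k j := fun h => hne (R_inj k h)
    exact Set.disjoint_left.mp (hd hi.2 hj.2 hRne) hp.1 hp.2
  rw [hcard]
  exact indep5 u
    (hij 0 1 (by decide) ⟨_, w01 k⟩)
    (hij 1 2 (by decide) ⟨_, w12 k⟩)
    (hij 2 3 (by decide) ⟨_, w23 k⟩)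
    (hij 3 4 (by decide) ⟨_, w34 k⟩)
    (hij 4 0 (by decide) ⟨_, (w40 k)⟩)

end Comb
section Tau

lemma gadget_tau (k : ℕ) (S : Finset V2) (hp : ∀ i : Fin 5, ∃ p ∈ S, p ∈ R k i) :
    3 ≤ (S.filter (fun p => (10*k:ℝ) ≤ p 0 ∧ p 0 ≤ 10*(k:ℝ)+4)).card := by
  choose g hgS hgR using hp
  set Sk := S.filter (fun p => (10*k:ℝ) ≤ p 0 ∧ p 0 ≤ 10*(k:ℝ)+4) with hSk
  have hg : ∀ i : Fin 5, g i ∈ Sk := fun i =>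
    Finset.mem_filter.mpr ⟨hgS i, R_xbounds (hgR i)⟩
  have h5 : (Finset.univ : Finset (Fin 5)).card =
      ∑ p ∈ Sk, (Finset.univ.filter fun i : Fin 5 => g i = p).card :=
    Finset.card_eq_sum_card_fiberwise (fun i _ => hg i)
  have hfib : ∀ p ∈ Sk, (Finset.univ.filter fun i : Fin 5 => g i = p).card ≤ 2 := by
    intro p _
    refine le_trans (Finset.card_le_card ?_) (point_in_le_two k p)
    intro i hi
    simp only [Finset.mem_filter, Finset.mem_univ, true_and] at hi ⊢
    rw [← hi]; exact hgR i
  have : (5 : ℕ) ≤ 2 * Sk.card := by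
    calc (5:ℕ) = (Finset.univ : Finset (Fin 5)).card := by simp
    _ = ∑ p ∈ Sk, (Finset.univ.filter fun i : Fin 5 => g i = p).card := h5
    _ ≤ ∑ _p ∈ Sk, 2 := Finset.sum_le_sum hfib
    _ = 2 * Sk.card := by rw [Finset.sum_const, smul_eq_mul, mul_comm]
  omega

end Tau

def Fam (m o : ℕ) : Finset (Set V2) :=
  (Finset.range m).biUnion (fun k => Finset.image (R k) Finset.univ) ∪
    (Finset.range o).image (fun _ => Ex m)

lemma mem_Fam {m o : ℕ} {B : Set V2} :
    B ∈ Fam m o ↔ (∃ k < m, ∃ i : Fin 5, R k i = B) ∨ (0 < o ∧ B = Ex m) := by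
  simp only [Fam, Finset.mem_union, Finset.mem_biUnion, Finset.mem_image, Finset.mem_range,
    Finset.mem_univ, true_and, eq_comm (b := B)]
  constructor
  · rintro (h | ⟨a, ha, hB⟩)
    · exact Or.inl h
    · exact Or.inr ⟨by omega, hB⟩
  · rintro (h | ⟨ho, hB⟩)
    · exact Or.inl h
    · exact Or.inr ⟨0, ho, hB⟩
def Pset (m o : ℕ) : Finset V2 :=
  (Finset.range m).biUnion
      (fun k => {pt (10*k+3) 6, pt (10*k+2) 0, pt (10*k) 1}) ∪
    (Finset.range o).image (fun _ => pt (10*m) 0)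

lemma mem_triple_bounds {k : ℕ} {q : V2}
    (hq : q ∈ ({pt (10*k+3) 6, pt (10*k+2) 0, pt (10*(k:ℝ)) 1} : Finset V2)) :
    (10*k : ℝ) ≤ q 0 ∧ q 0 ≤ 10*k+3 := by
  simp only [Finset.mem_insert, Finset.mem_singleton] at hq
  rcases hq with rfl | rfl | rfl <;> simp <;> norm_num

lemma card_Pset {m o : ℕ} (ho : o ≤ 1) : (Pset m o).card = 3*m + o := by
  have hdisj : Disjoint
      ((Finset.range m).biUnion
        (fun k => ({pt (10*k+3) 6, pt (10*k+2) 0, pt (10*k) 1} : Finset V2)))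
      ((Finset.range o).image (fun _ => pt (10*m) 0)) := by
    rw [Finset.disjoint_right]
    intro q hq hq'
    obtain ⟨a, -, rfl⟩ := Finset.mem_image.mp hq
    obtain ⟨k, hk, hmem⟩ := Finset.mem_biUnion.mp hq'
    have hb := (mem_triple_bounds hmem).2
    have := cast_lt (Finset.mem_range.mp hk)
    simp only [pt_zero] at hb
    linarith
  rw [Pset, Finset.card_union_of_disjoint hdisj]
  have h1 : ((Finset.range m).biUnion
      (fun k => ({pt (10*k+3) 6, pt (10*k+2) 0, pt (10*k) 1} : Finset V2))).card = 3*m := by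
    rw [Finset.card_biUnion]
    · have : ∀ k : ℕ, ({pt (10*k+3) 6, pt (10*k+2) 0, pt (10*k) 1} : Finset V2).card = 3 := by
        intro k
        rw [Finset.card_insert_of_notMem, Finset.card_insert_of_notMem,
          Finset.card_singleton]
        · simp only [Finset.mem_singleton]
          intro h; have := (pt_inj h).1; norm_num at this
        · simp only [Finset.mem_insert, Finset.mem_singleton]
          rintro (h | h) <;> · have := (pt_inj h).1; norm_num at this
      rw [Finset.sum_congr rfl (fun k _ => this k), Finset.sum_const, Finset.card_range,
        smul_eq_mul, mul_comm]
    · intro k hk k' hk' hne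
      rw [Function.onFun, Finset.disjoint_left]
      intro q hq hq'
      have h1 := mem_triple_bounds hq
      have h2 := mem_triple_bounds hq'
      rcases hne.lt_or_gt with h | h <;> · have := cast_lt h; linarith [h1.1, h1.2, h2.1, h2.2]
  have h2 : ((Finset.range o).image (fun _ => pt (10*(m:ℝ)) 0)).card = o := by
    rw [Finset.card_image_of_injOn, Finset.card_range]
    intro a ha b hb _
    simp only [Finset.mem_coe, Finset.mem_range] at ha hb
    omega
  rw [h1, h2]

lemma piercing_Pset (m o : ℕ) : Piercing (Pset m o) (Fam m o) := by
  intro B hB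
  rw [mem_Fam] at hB
  have hmem3 : ∀ k < m, ∀ q ∈ ({pt (10*k+3) 6, pt (10*k+2) 0, pt (10*(k:ℝ)) 1} : Finset V2),
      q ∈ Pset m o := by
    intro k hk q hq
    exact Finset.mem_union_left _ (Finset.mem_biUnion.mpr ⟨k, Finset.mem_range.mpr hk, hq⟩)
  rcases hB with ⟨k, hk, i, rfl⟩ | ⟨ho, rfl⟩
  · fin_cases i
    · exact ⟨pt (10*k+3) 6, hmem3 k hk _ (by simp), (w01 k).1⟩
    · exact ⟨pt (10*k+3) 6, hmem3 k hk _ (by simp), (w01 k).2⟩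
    · exact ⟨pt (10*k+2) 0, hmem3 k hk _ (by simp), (w23 k).1⟩
    · exact ⟨pt (10*k+2) 0, hmem3 k hk _ (by simp), (w23 k).2⟩
    · exact ⟨pt (10*k) 1, hmem3 k hk _ (by simp), (w34 k).2⟩
  · refine ⟨pt (10*m) 0, Finset.mem_union_right _ ?_, ?_⟩
    · exact Finset.mem_image.mpr ⟨0, Finset.mem_range.mpr ho, rfl⟩
    · simp only [Ex, mem_rect, pt_zero, pt_one]
      norm_num

lemma tau_lower {m o : ℕ} (ho : o ≤ 1) (S : Finset V2) (hS : Piercing S (Fam m o)) :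
    3*m + o ≤ S.card := by
  set U := (Finset.range m).biUnion
    (fun k => S.filter (fun p => (10*k:ℝ) ≤ p 0 ∧ p 0 ≤ 10*(k:ℝ)+4)) with hUdef
  have hUS : U ⊆ S := Finset.biUnion_subset.mpr (fun k _ => Finset.filter_subset _ _)
  have hUcard : 3*m ≤ U.card := by
    rw [hUdef, Finset.card_biUnion]
    · calc 3*m = ∑ _k ∈ Finset.range m, 3 := by
            rw [Finset.sum_const, Finset.card_range, smul_eq_mul, mul_comm]
      _ ≤ _ := Finset.sum_le_sum (fun k hk => gadget_tau k S
          (fun i => hS (R k i) (mem_Fam.mpr (Or.inl ⟨k, Finset.mem_range.mp hk, i, rfl⟩))))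
    · intro k hk k' hk' hne
      rw [Function.onFun, Finset.disjoint_left]
      intro q hq hq'
      have h1 := (Finset.mem_filter.mp hq).2
      have h2 := (Finset.mem_filter.mp hq').2
      rcases hne.lt_or_gt with h | h <;> · have := cast_lt h; linarith [h1.1, h1.2, h2.1, h2.2]
  have hUx : ∀ q ∈ U, q 0 < 10*(m:ℝ) := by
    intro q hq
    obtain ⟨k, hk, hfk⟩ := Finset.mem_biUnion.mp hq
    have h1 := (Finset.mem_filter.mp hfk).2.2
    have := cast_lt (Finset.mem_range.mp hk)
    linarith
  interval_cases o
  · simpa using le_trans hUcard (Finset.card_le_card hUS)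
  · obtain ⟨q, hqS, hqE⟩ := hS (Ex m) (mem_Fam.mpr (Or.inr ⟨by omega, rfl⟩))
    have hqU : q ∉ U := by
      intro h
      have := hUx q h
      have := Ex_xbounds hqE
      linarith
    have hins : insert q U ⊆ S := by
      intro x hx
      rcases Finset.mem_insert.mp hx with rfl | hx
      · exact hqS
      · exact hUS hx
    have := Finset.card_le_card hins
    rw [Finset.card_insert_of_notMem hqU] at this
    omega

lemma tau_Fam {m o : ℕ} (ho : o ≤ 1) : tau (Fam m o) = 3*m + o := by
  apply le_antisymm
  · exact Nat.sInf_le ⟨Pset m o, card_Pset ho, piercing_Pset m o⟩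
  · refine le_csInf ⟨(Pset m o).card, ⟨Pset m o, rfl, piercing_Pset m o⟩⟩ ?_
    rintro t ⟨S, rfl, hSp⟩
    exact tau_lower ho S hSp
lemma R_nonempty (k : ℕ) (i : Fin 5) : ∃ p, p ∈ R k i := by
  fin_cases i
  · exact ⟨_, (w01 k).1⟩
  · exact ⟨_, (w01 k).2⟩
  · exact ⟨_, (w23 k).1⟩
  · exact ⟨_, (w23 k).2⟩
  · exact ⟨_, (w34 k).2⟩

lemma R_disj_ne {k k' : ℕ} (h : k ≠ k') (i i' : Fin 5) : Disjoint (R k i) (R k' i') := by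
  rcases h.lt_or_gt with h | h
  · exact R_disj_cross h i i'
  · exact (R_disj_cross h i' i).symm

def Gset (m o : ℕ) : Finset (Set V2) :=
  (Finset.range m).biUnion (fun k => {R k 0, R k 2}) ∪
    (Finset.range o).image (fun _ => Ex m)

lemma Gset_subset (m o : ℕ) : Gset m o ⊆ Fam m o := by
  intro B hB
  rcases Finset.mem_union.mp hB with h | h
  · obtain ⟨k, hk, hm⟩ := Finset.mem_biUnion.mp h
    refine Finset.mem_union_left _ (Finset.mem_biUnion.mpr ⟨k, hk, ?_⟩)
    simp only [Finset.mem_insert, Finset.mem_singleton] at hm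
    rcases hm with rfl | rfl
    · exact Finset.mem_image.mpr ⟨0, Finset.mem_univ _, rfl⟩
    · exact Finset.mem_image.mpr ⟨2, Finset.mem_univ _, rfl⟩
  · exact Finset.mem_union_right _ h

lemma card_Gset {m o : ℕ} (ho : o ≤ 1) : (Gset m o).card = 2*m + o := by
  have hdisj : Disjoint
      ((Finset.range m).biUnion (fun k => ({R k 0, R k 2} : Finset (Set V2))))
      ((Finset.range o).image (fun _ => Ex m)) := by
    rw [Finset.disjoint_right]
    intro B hB hB'
    obtain ⟨a, -, rfl⟩ := Finset.mem_image.mp hB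
    obtain ⟨k, hk, hmem⟩ := Finset.mem_biUnion.mp hB'
    have hk' := Finset.mem_range.mp hk
    simp only [Finset.mem_insert, Finset.mem_singleton] at hmem
    rcases hmem with h | h
    · exact ne_of_disj (Ex_disj hk' 0) (w01 k).1 h.symm
    · exact ne_of_disj (Ex_disj hk' 2) (w23 k).1 h.symm
  rw [Gset, Finset.card_union_of_disjoint hdisj]
  have h1 : ((Finset.range m).biUnion (fun k => ({R k 0, R k 2} : Finset (Set V2)))).card
      = 2*m := by
    rw [Finset.card_biUnion]
    · have : ∀ k : ℕ, ({R k 0, R k 2} : Finset (Set V2)).card = 2 := by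
        intro k
        rw [Finset.card_insert_of_notMem, Finset.card_singleton]
        simp only [Finset.mem_singleton]
        exact ne_of_disj (disj02 k) (w01 k).1
      rw [Finset.sum_congr rfl (fun k _ => this k), Finset.sum_const, Finset.card_range,
        smul_eq_mul, mul_comm]
    · intro k hk k' hk' hne
      rw [Function.onFun, Finset.disjoint_left]
      intro B hB hB'
      simp only [Finset.mem_insert, Finset.mem_singleton] at hB hB'
      rcases hB with rfl | rfl <;> rcases hB' with h' | h' <;>
        · obtain ⟨p, hp⟩ := R_nonempty k _
          exact ne_of_disj (R_disj_ne hne _ _) hp h'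
  have h2 : ((Finset.range o).image (fun _ => Ex m)).card = o := by
    rw [Finset.card_image_of_injOn, Finset.card_range]
    intro a ha b hb _
    simp only [Finset.mem_coe, Finset.mem_range] at ha hb
    omega
  rw [h1, h2]

lemma pd_Gset (m o : ℕ) : ((Gset m o : Set (Set V2))).PairwiseDisjoint id := by
  have hmem : ∀ B ∈ Gset m o,
      (∃ k < m, B = R k 0 ∨ B = R k 2) ∨ B = Ex m := by
    intro B hB
    rcases Finset.mem_union.mp hB with h | h
    · obtain ⟨k, hk, hm⟩ := Finset.mem_biUnion.mp h
      simp only [Finset.mem_insert, Finset.mem_singleton] at hm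
      exact Or.inl ⟨k, Finset.mem_range.mp hk, hm⟩
    · obtain ⟨a, -, rfl⟩ := Finset.mem_image.mp h
      exact Or.inr rfl
  intro s hs t ht hst
  simp only [Finset.mem_coe] at hs ht
  have hdisj : ∀ (k k' : ℕ) (i i' : Fin 5), k < m → k' < m →
      (i = 0 ∨ i = 2) → (i' = 0 ∨ i' = 2) → R k i ≠ R k' i' →
      Disjoint (R k i) (R k' i') := by
    intro k k' i i' hk hk' hi hi' hne
    rcases lt_trichotomy k k' with h | rfl | h
    · exact R_disj_cross h i i'
    · rcases hi with rfl | rfl <;> rcases hi' with rfl | rfl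
      · exact absurd rfl hne
      · exact disj02 k
      · exact (disj02 k).symm
      · exact absurd rfl hne
    · exact (R_disj_cross h i' i).symm
  rcases hmem s hs with ⟨k, hk, hks⟩ | rfl <;> rcases hmem t ht with ⟨k', hk', hkt⟩ | rfl
  · have : Disjoint s t := by
      rcases hks with rfl | rfl <;> rcases hkt with rfl | rfl <;>
        first
        | exact hdisj k k' 0 0 hk hk' (Or.inl rfl) (Or.inl rfl) hst
        | exact hdisj k k' 0 2 hk hk' (Or.inl rfl) (Or.inr rfl) hst
        | exact hdisj k k' 2 0 hk hk' (Or.inr rfl) (Or.inl rfl) hst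
        | exact hdisj k k' 2 2 hk hk' (Or.inr rfl) (Or.inr rfl) hst
    exact this
  · rcases hks with rfl | rfl <;> exact Ex_disj hk _
  · rcases hkt with rfl | rfl <;> exact (Ex_disj hk' _).symm
  · exact absurd rfl hst

lemma nu_upper {m o : ℕ} (ho : o ≤ 1) (G : Finset (Set V2)) (hG : G ⊆ Fam m o)
    (hd : (G : Set (Set V2)).PairwiseDisjoint id) : G.card ≤ 2*m + o := by
  set FA := (Finset.range m).biUnion (fun k => Finset.image (R k) Finset.univ) with hFA
  set FB := (Finset.range o).image (fun _ => Ex m) with hFB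
  set GA := G.filter (· ∈ FA) with hGA
  set GB := G.filter (· ∈ FB) with hGB
  have hcover : G ⊆ GA ∪ GB := by
    intro B hB
    rcases Finset.mem_union.mp (hG hB) with h | h
    · exact Finset.mem_union_left _ (Finset.mem_filter.mpr ⟨hB, h⟩)
    · exact Finset.mem_union_right _ (Finset.mem_filter.mpr ⟨hB, h⟩)
  have hB_card : GB.card ≤ o := by
    calc GB.card ≤ FB.card :=
          Finset.card_le_card (fun B hB => (Finset.mem_filter.mp hB).2)
    _ ≤ (Finset.range o).card := Finset.card_image_le
    _ = o := Finset.card_range o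
  have hA_card : GA.card ≤ 2*m := by
    have hGAsub : GA = (Finset.range m).biUnion
        (fun k => GA ∩ Finset.image (R k) Finset.univ) := by
      ext B
      constructor
      · intro hB
        have hFAB := (Finset.mem_filter.mp hB).2
        obtain ⟨k, hk, hmem⟩ := Finset.mem_biUnion.mp hFAB
        exact Finset.mem_biUnion.mpr ⟨k, hk, Finset.mem_inter.mpr ⟨hB, hmem⟩⟩
      · intro hB
        obtain ⟨k, hk, hmem⟩ := Finset.mem_biUnion.mp hB
        exact (Finset.mem_inter.mp hmem).1
    calc GA.card ≤ ∑ k ∈ Finset.range m, (GA ∩ Finset.image (R k) Finset.univ).card := by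
          conv_lhs => rw [hGAsub]
          apply Finset.card_biUnion_le
    _ ≤ ∑ _k ∈ Finset.range m, 2 := Finset.sum_le_sum (fun k _ => by
        refine gadget_indep k _ Finset.inter_subset_right ?_
        refine hd.subset ?_
        intro B hB
        have h1 := (Finset.mem_inter.mp (Finset.mem_coe.mp hB)).1
        exact Finset.mem_coe.mpr (Finset.mem_filter.mp h1).1)
    _ = 2*m := by rw [Finset.sum_const, Finset.card_range, smul_eq_mul, mul_comm]
  calc G.card ≤ (GA ∪ GB).card := Finset.card_le_card hcover
  _ ≤ GA.card + GB.card := Finset.card_union_le _ _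
  _ ≤ 2*m + o := by omega

lemma nu_Fam {m o : ℕ} (ho : o ≤ 1) : nu (Fam m o) = 2*m + o := by
  have hmem : (2*m + o) ∈ {n | ∃ G ⊆ Fam m o, G.card = n ∧
      (G : Set (Set V2)).PairwiseDisjoint id} :=
    ⟨Gset m o, Gset_subset m o, card_Gset ho, pd_Gset m o⟩
  have hbound : ∀ t ∈ {n | ∃ G ⊆ Fam m o, G.card = n ∧
      (G : Set (Set V2)).PairwiseDisjoint id}, t ≤ 2*m + o := by
    rintro t ⟨G, hG, rfl, hd⟩
    exact nu_upper ho G hG hd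
  apply le_antisymm
  · exact csSup_le ⟨2*m + o, hmem⟩ hbound
  · exact le_csSup ⟨2*m + o, hbound⟩ hmem
lemma Fam_isBox {m o : ℕ} : ∀ B ∈ Fam m o, IsBox 2 B := by
  intro B hB
  rcases mem_Fam.mp hB with ⟨k, hk, i, rfl⟩ | ⟨-, rfl⟩
  · fin_cases i
    · exact isBox_rect (by norm_num) (by norm_num)
    · exact isBox_rect (by norm_num) (by norm_num)
    · exact isBox_rect (by norm_num) (by norm_num)
    · exact isBox_rect (by norm_num) (by norm_num)
    · exact isBox_rect (by norm_num) (by norm_num)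
  · exact isBox_rect (by norm_num) (by norm_num)

lemma Fam_line {m o : ℕ} : ∀ B ∈ Fam m o, ∃ p ∈ B, p 1 = (0:ℝ) ∨ p 1 = (7:ℝ) := by
  intro B hB
  rcases mem_Fam.mp hB with ⟨k, hk, i, rfl⟩ | ⟨-, rfl⟩
  · fin_cases i
    · exact ⟨pt (10*k) 7, show pt (10*(k:ℝ)) 7 ∈ rect (10*k) (10*k+3) 6 7 by norm_num [mem_rect], Or.inr rfl⟩
    · exact ⟨pt (10*k+3) 7, show pt (10*(k:ℝ)+3) 7 ∈ rect (10*k+3) (10*k+4) 3 7 by norm_num [mem_rect], Or.inr rfl⟩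
    · exact ⟨pt (10*k+2) 0, (w23 k).1, Or.inl rfl⟩
    · exact ⟨pt (10*k) 0, show pt (10*(k:ℝ)) 0 ∈ rect (10*k) (10*k+2) 0 1 by norm_num [mem_rect], Or.inl rfl⟩
    · exact ⟨pt (10*k) 7, show pt (10*(k:ℝ)) 7 ∈ rect (10*k) (10*k+1) 1 7 by norm_num [mem_rect], Or.inr rfl⟩
  · exact ⟨pt (10*m) 0, show pt (10*(m:ℝ)) 0 ∈ rect (10*m) (10*m+1) 0 1 by norm_num [mem_rect], Or.inl rfl⟩


/-- Sharpness of the two-line lemma: for every n ≥ 1 there is a family of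
rectangles, each meeting one of two horizontal lines, with ν = n and
τ = ⌊3n/2⌋. -/
theorem two_line_lemma_sharp (n : ℕ) (hn : 1 ≤ n) :
    ∃ (F : Finset (Set (Fin 2 → ℝ))) (c₁ c₂ : ℝ),
      (∀ B ∈ F, IsBox 2 B) ∧
      (∀ B ∈ F, ∃ p ∈ B, p 1 = c₁ ∨ p 1 = c₂) ∧
      nu F = n ∧ tau F = 3 * n / 2 := by
  have ho : n % 2 ≤ 1 := by omega
  refine ⟨Fam (n/2) (n%2), 0, 7, Fam_isBox, Fam_line, ?_, ?_⟩
  · rw [nu_Fam ho]; omega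
  · rw [tau_Fam ho]; omega


end TwoLine
end

section
/- Suppose g : ℕ × ℕ → ℝ satisfies g(n,2) ≤ n·log_{9^{1/3}}(n) + n for all n ≥ 1 and g(n,d) ≤ n + log₂(n)·g(n,d−1) for all n ≥ 1, d ≥ 3. Then for each fixed d ≥ 2 there is a constant C_d with g(n,d) ≤ log_{9^{1/3}}(2)·n·(log₂ n)^{d−1} + C_d·n·(log₂ n)^{d−2}·max(1, log₂ log₂ n)⁰ for all n ≥ 2; in particular g(n,d) = (log_{9^{1/3}} 2 + o(1))·n·(log₂ n)^{d−1} as n → ∞. -/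
private lemma logb_factor (n : ℝ) :
    Real.logb ((9 : ℝ) ^ ((1 : ℝ) / 3)) n
      = Real.logb ((9 : ℝ) ^ ((1 : ℝ) / 3)) 2 * Real.logb 2 n := by
  have h2 : Real.log 2 ≠ 0 := ne_of_gt (Real.log_pos one_lt_two)
  have h9 : (0:ℝ) < Real.log 9 := Real.log_pos (by norm_num)
  have hb : Real.log ((9 : ℝ) ^ ((1 : ℝ) / 3)) ≠ 0 := by
    rw [Real.log_rpow (by norm_num : (0:ℝ) < 9)]
    positivity
  rw [Real.logb, Real.logb, Real.logb]
  field_simp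

private lemma one_lt_base : 1 < (9 : ℝ) ^ ((1 : ℝ) / 3) :=
  Real.one_lt_rpow_iff_of_pos (by norm_num) |>.mpr (Or.inl ⟨by norm_num, by norm_num⟩)

private lemma aux_dim (g : ℕ → ℕ → ℝ)
    (h2 : ∀ n : ℕ, 1 ≤ n →
      g n 2 ≤ n * Real.logb ((9 : ℝ) ^ ((1 : ℝ) / 3)) n + n)
    (hd : ∀ n d : ℕ, 1 ≤ n → 3 ≤ d →
      g n d ≤ n + Real.logb 2 n * g n (d - 1)) :
    ∀ d : ℕ, 2 ≤ d → ∃ C : ℝ, 0 ≤ C ∧ ∀ n : ℕ, 2 ≤ n →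
      g n d ≤ Real.logb ((9 : ℝ) ^ ((1 : ℝ) / 3)) 2 * n * (Real.logb 2 n) ^ (d - 1)
        + C * n * (Real.logb 2 n) ^ (d - 2) := by
  intro d hd2
  set L := Real.logb ((9 : ℝ) ^ ((1 : ℝ) / 3)) 2 with hL
  induction d, hd2 using Nat.le_induction with
  | base =>
    refine ⟨1, zero_le_one, fun n hn => ?_⟩
    have h := h2 n (by omega)
    rw [logb_factor] at h
    calc g n 2 ≤ ↑n * (L * Real.logb 2 ↑n) + ↑n := h
      _ = L * ↑n * Real.logb 2 ↑n ^ (2 - 1) + 1 * ↑n * Real.logb 2 ↑n ^ (2 - 2) := by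
          norm_num
          ring
  | succ d hd2 IH =>
    obtain ⟨C, hC0, hC⟩ := IH
    refine ⟨C + 1, by linarith, fun n hn => ?_⟩
    set X := Real.logb 2 (n : ℝ) with hXdef
    have hX1 : 1 ≤ X := by
      rw [hXdef, show (1:ℝ) = Real.logb 2 2 by simp]
      exact Real.logb_le_logb_of_le one_lt_two (by norm_num) (by exact_mod_cast hn)
    have hX0 : (0:ℝ) ≤ X := by linarith
    have step := hd n (d + 1) (by omega) (by omega)
    have hs : d + 1 - 1 = d := by omega
    rw [hs] at step
    have ihn := hC n hn
    have e1 : X * X ^ (d - 1) = X ^ d := by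
      rw [← pow_succ']
      congr 1
      omega
    have e2 : X * X ^ (d - 2) = X ^ (d - 1) := by
      rw [← pow_succ']
      congr 1
      omega
    have hn0 : (0:ℝ) ≤ (n:ℝ) := by positivity
    have hnX : (n:ℝ) ≤ (n:ℝ) * X ^ (d - 1) :=
      le_mul_of_one_le_right hn0 (one_le_pow₀ hX1)
    have e3 : d + 1 - 1 = d := by omega
    have e4 : d + 1 - 2 = d - 1 := by omega
    rw [e3, e4]
    calc g n (d + 1) ≤ ↑n + X * g n d := step
      _ ≤ ↑n + X * (L * ↑n * X ^ (d - 1) + C * ↑n * X ^ (d - 2)) := by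
          gcongr
      _ = ↑n + L * ↑n * (X * X ^ (d - 1)) + C * ↑n * (X * X ^ (d - 2)) := by ring
      _ = ↑n + L * ↑n * X ^ d + C * ↑n * X ^ (d - 1) := by rw [e1, e2]
      _ ≤ L * ↑n * X ^ d + (C + 1) * ↑n * X ^ (d - 1) := by nlinarith

/-- The analytic induction on the dimension: if g(n,2) ≤ n·log_{9^{1/3}} n + n
for n ≥ 1 and g(n,d) ≤ n + log₂ n · g(n,d-1) for n ≥ 1, d ≥ 3, then for each
fixed d ≥ 2 one has g(n,d) ≤ log_{9^{1/3}} 2 · n·(log₂ n)^{d-1} + C·n·(log₂ n)^{d-2}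
for some constant C and all n ≥ 2; in particular
g(n,d) ≤ (log_{9^{1/3}} 2 + o(1))·n·(log₂ n)^{d-1}. -/
theorem dim_induction (g : ℕ → ℕ → ℝ)
    (h2 : ∀ n : ℕ, 1 ≤ n →
      g n 2 ≤ n * Real.logb ((9 : ℝ) ^ ((1 : ℝ) / 3)) n + n)
    (hd : ∀ n d : ℕ, 1 ≤ n → 3 ≤ d →
      g n d ≤ n + Real.logb 2 n * g n (d - 1)) :
    ∀ d : ℕ, 2 ≤ d →
      (∃ C : ℝ, ∀ n : ℕ, 2 ≤ n →
        g n d ≤ Real.logb ((9 : ℝ) ^ ((1 : ℝ) / 3)) 2 * n * (Real.logb 2 n) ^ (d - 1)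
          + C * n * (Real.logb 2 n) ^ (d - 2)) ∧
      (∀ ε : ℝ, 0 < ε → ∃ N : ℕ, ∀ n : ℕ, N ≤ n →
        g n d ≤ (Real.logb ((9 : ℝ) ^ ((1 : ℝ) / 3)) 2 + ε) * n *
          (Real.logb 2 n) ^ (d - 1)) := by
  intro d hd2
  obtain ⟨C, hC0, hC⟩ := aux_dim g h2 hd d hd2
  refine ⟨⟨C, fun n hn => hC n hn⟩, fun ε hε => ?_⟩
  refine ⟨max 2 (⌈(2:ℝ) ^ (C / ε)⌉₊ + 1), fun n hn => ?_⟩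
  have hn2 : 2 ≤ n := le_trans (le_max_left _ _) hn
  have hnr : (2:ℝ) ^ (C / ε) ≤ (n : ℝ) := by
    have h1 : (⌈(2:ℝ) ^ (C / ε)⌉₊ : ℝ) ≤ (n : ℝ) := by
      have : ⌈(2:ℝ) ^ (C / ε)⌉₊ ≤ n := le_trans (by omega) (le_trans (le_max_right _ _) hn)
      exact_mod_cast this
    exact le_trans (Nat.le_ceil _) h1
  set X := Real.logb 2 (n : ℝ) with hXdef
  have hX1 : 1 ≤ X := by
    rw [hXdef, show (1:ℝ) = Real.logb 2 2 by simp]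
    exact Real.logb_le_logb_of_le one_lt_two (by norm_num) (by exact_mod_cast hn2)
  have hX0 : (0:ℝ) ≤ X := by linarith
  have hCX : C ≤ ε * X := by
    have h1 : C / ε = Real.logb 2 ((2:ℝ) ^ (C / ε)) := by
      rw [Real.logb_rpow (by norm_num) (by norm_num)]
    have h2' : Real.logb 2 ((2:ℝ) ^ (C / ε)) ≤ X := by
      rw [hXdef]
      exact Real.logb_le_logb_of_le one_lt_two (by positivity) hnr
    have : C / ε ≤ X := by rw [h1]; exact h2'
    calc C = ε * (C / ε) := by field_simp
      _ ≤ ε * X := by nlinarith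
  have e2 : X * X ^ (d - 2) = X ^ (d - 1) := by
    rw [← pow_succ']
    congr 1
    omega
  have hn0 : (0:ℝ) ≤ (n:ℝ) := by positivity
  have hpow0 : (0:ℝ) ≤ X ^ (d - 2) := by positivity
  calc g n d ≤ Real.logb ((9 : ℝ) ^ ((1 : ℝ) / 3)) 2 * ↑n * X ^ (d - 1)
        + C * ↑n * X ^ (d - 2) := hC n hn2
    _ ≤ Real.logb ((9 : ℝ) ^ ((1 : ℝ) / 3)) 2 * ↑n * X ^ (d - 1)
        + (ε * X) * ↑n * X ^ (d - 2) := by nlinarith [mul_le_mul_of_nonneg_right hCX (mul_nonneg hn0 hpow0)]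
    _ = Real.logb ((9 : ℝ) ^ ((1 : ℝ) / 3)) 2 * ↑n * X ^ (d - 1)
        + ε * ↑n * (X * X ^ (d - 2)) := by ring
    _ = (Real.logb ((9 : ℝ) ^ ((1 : ℝ) / 3)) 2 + ε) * ↑n * X ^ (d - 1) := by
        rw [e2]; ring
end
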